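/- For any nonempty decision table T, there exists a table T* in the closure [T] of T under removal of columns and changing of decisions such that the minimum depth of a deterministic decision tree for T* satisfies h^d(T*) ≥ (log_k N(T))/Ŝ(T) − 2, where N(T) is the number of rows of T and Ŝ(T) = max{S(T') : T' ∈ [T]}. -/

import Mathlib

/- Decision tables over E_{k+2} = {0, ..., k+1}, following Ostonov & Moshkov,
"Deterministic and Strongly Nondeterministic Decision Trees for Decision Tables
from Closed Classes".  Columns are labeled with attributes (natural numbers),
rows are functions supported on the attribute set, decisions are Booleans. -/

namespace ClosedClasses

/-- A decision table with 0-1-decisions over `E_{k+2}`. Rows are pairwise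
different (they form a `Finset`) and vanish outside the attribute set. -/
structure Table (k : ℕ) where
  attrs : Finset ℕ
  rows : Finset (ℕ → Fin (k + 2))
  dec : (ℕ → Fin (k + 2)) → Bool
  supp : ∀ r ∈ rows, ∀ a ∉ attrs, r a = 0

namespace Table

variable {k : ℕ}

/-- Number of columns. -/
def W (T : Table k) : ℕ := T.attrs.card

/-- Number of rows. -/
def N (T : Table k) : ℕ := T.rows.card

/-- All rows carry the same decision. -/
def ConstDec (T : Table k) : Prop :=
  ∀ r ∈ T.rows, ∀ r' ∈ T.rows, T.dec r = T.dec r'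

/-- `D` separates the row `r` from all other rows of `T`. -/
def Separates (T : Table k) (D : Finset ℕ) (r : ℕ → Fin (k + 2)) : Prop :=
  D ⊆ T.attrs ∧ ∀ r' ∈ T.rows, r' ≠ r → ∃ a ∈ D, r a ≠ r' a

/-- `S(T, r)`: minimum cardinality of a separating set for row `r`. -/
noncomputable def Srow (T : Table k) (r : ℕ → Fin (k + 2)) : ℕ :=
  sInf {m | ∃ D : Finset ℕ, T.Separates D r ∧ D.card = m}

/-- `S(T)`: maximum over rows of `S(T, r)`. -/
noncomputable def S (T : Table k) : ℕ :=
  sSup {m | ∃ r ∈ T.rows, T.Srow r = m}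

/-- A test of `T`: a set of columns distinguishing rows with different decisions. -/
def IsTest (T : Table k) (D : Finset ℕ) : Prop :=
  D ⊆ T.attrs ∧
    ∀ r ∈ T.rows, ∀ r' ∈ T.rows, T.dec r ≠ T.dec r' → ∃ a ∈ D, r a ≠ r' a

/-- `Θ(T)`: minimum cardinality of a test of `T`. -/
noncomputable def theta (T : Table k) : ℕ :=
  sInf {m | ∃ D : Finset ℕ, T.IsTest D ∧ D.card = m}

end Table

/-- `(k+2)`-decision trees: leaves carry decisions, internal nodes query an
attribute and branch on its `k+2` possible values. -/
inductive DT (k : ℕ) where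
  | leaf : Bool → DT k
  | node : ℕ → (Fin (k + 2) → DT k) → DT k

namespace DT

variable {k : ℕ}

/-- Deterministic evaluation of a tree on a row. -/
def eval : DT k → (ℕ → Fin (k + 2)) → Bool
  | leaf b, _ => b
  | node a ch, r => eval (ch (r a)) r

/-- Depth: maximum number of queries along a complete path. -/
def depth : DT k → ℕ
  | leaf _ => 0
  | node _ ch => 1 + Finset.univ.sup fun i => (ch i).depth

/-- The set `P(Γ)` of attributes queried in the tree. -/
def attrSet : DT k → Finset ℕ
  | leaf _ => ∅
  | node a ch => insert a (Finset.univ.biUnion fun i => (ch i).attrSet)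

/-- `ψ`-cost: maximum over complete paths of `ψ` of the word of queried
attributes (the accumulator `w` holds attributes already queried). -/
def cost (ψ : List ℕ → ℕ) : DT k → List ℕ → ℕ
  | leaf _, w => ψ w
  | node a ch, w => Finset.univ.sup fun i => cost ψ (ch i) (a :: w)

end DT

/-- `Γ` is a deterministic decision tree for the table `T`. -/
def IsDT {k : ℕ} (T : Table k) (Γ : DT k) : Prop :=
  Γ.attrSet ⊆ T.attrs ∧ ∀ r ∈ T.rows, Γ.eval r = T.dec r

/-- `h^d(T)`: minimum depth of a deterministic decision tree for `T`. -/
noncomputable def hd {k : ℕ} (T : Table k) : ℕ :=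
  sInf {m | ∃ Γ : DT k, IsDT T Γ ∧ Γ.depth = m}

/-- `ψ^d(T)`: minimum `ψ`-complexity of a deterministic decision tree for `T`. -/
noncomputable def psid {k : ℕ} (ψ : List ℕ → ℕ) (T : Table k) : ℕ :=
  sInf {m | ∃ Γ : DT k, IsDT T Γ ∧ Γ.cost ψ [] = m}

/-- A row satisfies a rule (a conjunction of equations `attribute = value`). -/
def RuleSat {k : ℕ} (rule : List (ℕ × Fin (k + 2))) (r : ℕ → Fin (k + 2)) : Prop :=
  ∀ p ∈ rule, r p.1 = p.2

/-- A strongly nondeterministic decision tree for `T`, represented by the set of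
words of its complete paths (rules): every rule uses attributes of `T`, each
row with decision 1 satisfies some rule, and each rule is consistent only with
rows carrying decision 1. -/
def IsSNDT {k : ℕ} (T : Table k) (R : Finset (List (ℕ × Fin (k + 2)))) : Prop :=
  (∀ rule ∈ R, ∀ p ∈ rule, p.1 ∈ T.attrs) ∧
  (∀ r ∈ T.rows, T.dec r = true → ∃ rule ∈ R, RuleSat rule r) ∧
  (∀ rule ∈ R, ∀ r ∈ T.rows, RuleSat rule r → T.dec r = true)

/-- `ψ^s(T)`: minimum `ψ`-complexity of a strongly nondeterministic decision
tree for `T`. -/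
noncomputable def psis {k : ℕ} (ψ : List ℕ → ℕ) (T : Table k) : ℕ :=
  sInf {m | ∃ R, IsSNDT T R ∧ R.sup (fun rule => ψ (rule.map Prod.fst)) = m}

/-- `h^s(T)`: minimum depth of a strongly nondeterministic decision tree. -/
noncomputable def hs {k : ℕ} (T : Table k) : ℕ :=
  sInf {m | ∃ R, IsSNDT T R ∧ R.sup (fun rule => (rule.map Prod.fst).length) = m}

/-- A complexity measure on finite words over the alphabet `{f_i : i ∈ ω}`. -/
structure CMeasure where
  ψ : List ℕ → ℕ
  pos : ∀ w, ψ w = 0 ↔ w = []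
  perm : ∀ w w' : List ℕ, w.Perm w' → ψ w = ψ w'
  mono : ∀ w₁ w₂ : List ℕ, ψ w₁ ≤ ψ (w₁ ++ w₂)
  subadd : ∀ w₁ w₂ : List ℕ, ψ (w₁ ++ w₂) ≤ ψ w₁ + ψ w₂

/-- Bounded complexity measure: `ψ(α) ≥ |α|`. -/
def CMeasure.Bounded (ψ : CMeasure) : Prop := ∀ w : List ℕ, w.length ≤ ψ.ψ w

/-- Extension of a complexity measure to finite sets of attributes. -/
def CMeasure.setCost (ψ : CMeasure) (D : Finset ℕ) : ℕ := ψ.ψ (D.sort (· ≤ ·))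

namespace Table

variable {k : ℕ}

/-- `S_ψ(T, r)`: minimum `ψ`-complexity of a set separating `r` from the other rows. -/
noncomputable def Spsirow (ψ : CMeasure) (T : Table k) (r : ℕ → Fin (k + 2)) : ℕ :=
  sInf {m | ∃ D : Finset ℕ, T.Separates D r ∧ ψ.setCost D = m}

/-- `S_ψ(T)`: maximum over rows of `S_ψ(T, r)`. -/
noncomputable def Spsi (ψ : CMeasure) (T : Table k) : ℕ :=
  sSup {m | ∃ r ∈ T.rows, Spsirow ψ T r = m}

/-- `Θ_ψ(T)`: minimum `ψ`-complexity of a test of `T`. -/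
noncomputable def thetapsi (ψ : CMeasure) (T : Table k) : ℕ :=
  sInf {m | ∃ D : Finset ℕ, T.IsTest D ∧ ψ.setCost D = m}

/-- `W_ψ(T) = ψ(P(T))`. -/
def Wpsi (ψ : CMeasure) (T : Table k) : ℕ := ψ.setCost T.attrs

/-- `V_ψ(T) = max{ψ(f_i) : f_i ∈ P(T)}`. -/
noncomputable def Vpsi (ψ : CMeasure) (T : Table k) : ℕ :=
  sSup {m | ∃ a ∈ T.attrs, ψ.ψ [a] = m}

end Table

/-- Restriction of a row to a set of attributes. -/
def restrict {k : ℕ} (A : Finset ℕ) (r : ℕ → Fin (k + 2)) : ℕ → Fin (k + 2) :=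
  fun a => if a ∈ A then r a else 0

/-- `T'` belongs to the closure `[T]` of `T` under removal of columns and
changing of decisions: `T'` keeps a subset of the columns of `T`, its rows are
the restrictions of the rows of `T`, and its decisions are arbitrary. -/
def InClosure {k : ℕ} (T' T : Table k) : Prop :=
  T'.attrs ⊆ T.attrs ∧ (T'.rows : Set (ℕ → Fin (k + 2))) = restrict T'.attrs '' (T.rows : Set (ℕ → Fin (k + 2)))

/-- A nonempty class of decision tables closed under removal of columns and
changing of decisions. -/
def ClosedClass {k : ℕ} (A : Set (Table k)) : Prop :=
  A.Nonempty ∧ ∀ T ∈ A, ∀ T' : Table k, InClosure T' T → T' ∈ A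

/-- `Ŝ_ψ(T) = max{S_ψ(T') : T' ∈ [T]}`. -/
noncomputable def Shatpsi {k : ℕ} (ψ : CMeasure) (T : Table k) : ℕ :=
  sSup {m | ∃ T' : Table k, InClosure T' T ∧ T'.Spsi ψ = m}

/-- `Ŝ(T) = max{S(T') : T' ∈ [T]}`. -/
noncomputable def Shat {k : ℕ} (T : Table k) : ℕ :=
  sSup {m | ∃ T' : Table k, InClosure T' T ∧ T'.S = m}

/-- Fixing the attributes of the word `p` to the listed values restricts `T`
to a subtable (possibly empty) in which all rows carry the same decision. -/
def FixConst {k : ℕ} (T : Table k) (p : List (ℕ × Fin (k + 2))) : Prop :=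
  ∀ r ∈ T.rows, ∀ r' ∈ T.rows, RuleSat p r → RuleSat p r' → T.dec r = T.dec r'

/-- `M_ψ(T, δ)`: minimum `ψ`-value of a word of attributes of `T` whose
fixation to the values of `δ` yields a subtable with constant decisions. -/
noncomputable def Mpsirow {k : ℕ} (ψ : CMeasure) (T : Table k)
    (δ : ℕ → Fin (k + 2)) : ℕ :=
  sInf {m | ∃ p : List (ℕ × Fin (k + 2)),
    (∀ q ∈ p, q.1 ∈ T.attrs ∧ q.2 = δ q.1) ∧ FixConst T p ∧
      ψ.ψ (p.map Prod.fst) = m}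

/-- `M_ψ(T)`: maximum of `M_ψ(T, δ)` over all tuples `δ ∈ E_{k+2}^{W(T)}`. -/
noncomputable def Mpsi {k : ℕ} (ψ : CMeasure) (T : Table k) : ℕ :=
  sSup {m | ∃ δ : ℕ → Fin (k + 2), (∀ a ∉ T.attrs, δ a = 0) ∧ Mpsirow ψ T δ = m}

/-- A critical table: for every column there are two rows differing exactly
in this column. -/
def Critical {k : ℕ} (T : Table k) : Prop :=
  T.rows.Nonempty ∧ ∀ a ∈ T.attrs, ∃ r ∈ T.rows, ∃ r' ∈ T.rows,
    r a ≠ r' a ∧ ∀ b : ℕ, b ≠ a → r b = r' b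

/-- `H_D(n)`: the largest element of `D` not exceeding `n` (0 if none). -/
noncomputable def HD (D : Set ℕ) (n : ℕ) : ℕ := sSup (D ∩ Set.Iic n)

end ClosedClasses

open ClosedClasses


section Lemma14Aux

open ClosedClasses

/-! ### Auxiliary lemmas for Lemma 14 -/

lemma half_filter_aux {β : Type} [Fintype β] [DecidableEq β] (x y : β) (hxy : x ≠ y) :
    2 * (Finset.univ.filter fun ρ : β → Bool => ρ x ≠ ρ y).card =
      Fintype.card (β → Bool) := by
  classical
  set f : (β → Bool) → (β → Bool) := fun ρ => Function.update ρ x (!ρ x) with hfdef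
  have hfu : ∀ ρ, f ρ x = !ρ x := by
    intro ρ; simp [hfdef]
  have hfv : ∀ ρ, f ρ y = ρ y := by
    intro ρ; simp [hfdef, Function.update_of_ne (Ne.symm hxy)]
  have hff : ∀ ρ, f (f ρ) = ρ := by
    intro ρ; funext z
    by_cases hz : z = x
    · subst hz; simp [hfdef]
    · simp [hfdef, Function.update_of_ne hz]
  have hcard : (Finset.univ.filter fun ρ : β → Bool => ρ x ≠ ρ y).card =
      (Finset.univ.filter fun ρ : β → Bool => ¬(ρ x ≠ ρ y)).card := by
    refine Finset.card_nbij' f f ?_ ?_ ?_ ?_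
    · intro ρ hρ
      rw [Finset.mem_coe, Finset.mem_filter] at hρ ⊢
      refine ⟨Finset.mem_univ _, ?_⟩
      rw [not_ne_iff, hfu, hfv]
      have := hρ.2
      revert this
      cases ρ x <;> cases ρ y <;> simp
    · intro ρ hρ
      rw [Finset.mem_coe, Finset.mem_filter] at hρ ⊢
      refine ⟨Finset.mem_univ _, ?_⟩
      rw [hfu, hfv]
      have := hρ.2
      rw [not_ne_iff] at this
      rw [this]
      simp
    · intro ρ _; exact hff ρ
    · intro ρ _; exact hff ρ
  have hsplit : (Finset.univ.filter fun ρ : β → Bool => ρ x ≠ ρ y).card +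
      (Finset.univ.filter fun ρ : β → Bool => ¬(ρ x ≠ ρ y)).card =
      Fintype.card (β → Bool) := by
    rw [Finset.card_filter_add_card_filter_not, Finset.card_univ]
  rw [two_mul]
  nth_rewrite 2 [hcard]
  exact hsplit

lemma exists_coloring_aux' {β : Type} [Fintype β] [DecidableEq β] [Inhabited β]
    (s : Finset ℕ) (U V : ℕ → β) (hne : ∀ a ∈ s, U a ≠ V a) :
    ∃ ρ : β → Bool, s.card ≤ 2 * (s.filter fun a => ρ (U a) ≠ ρ (V a)).card := by
  classical
  by_contra hcon
  push_neg at hcon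
  have hsum : ∑ ρ : β → Bool, 2 * ((s.filter fun a => ρ (U a) ≠ ρ (V a)).card)
      = s.card * Fintype.card (β → Bool) := by
    calc ∑ ρ : β → Bool, 2 * ((s.filter fun a => ρ (U a) ≠ ρ (V a)).card)
        = ∑ a ∈ s, ∑ ρ : β → Bool, 2 * (if ρ (U a) ≠ ρ (V a) then 1 else 0) := by
          rw [Finset.sum_comm]
          congr 1; funext ρ
          rw [Finset.card_filter, Finset.mul_sum]
      _ = ∑ a ∈ s, Fintype.card (β → Bool) := by
          apply Finset.sum_congr rfl
          intro a ha
          rw [← Finset.mul_sum, ← Finset.card_filter]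
          exact half_filter_aux (U a) (V a) (hne a ha)
      _ = s.card * Fintype.card (β → Bool) := by
          rw [Finset.sum_const, smul_eq_mul]
  have hlt : ∑ ρ : β → Bool, 2 * ((s.filter fun a => ρ (U a) ≠ ρ (V a)).card)
      < ∑ _ρ : β → Bool, s.card := by
    apply Finset.sum_lt_sum_of_nonempty
    · exact ⟨fun _ => false, Finset.mem_univ _⟩
    · intro ρ _
      exact hcon ρ
  rw [hsum, Finset.sum_const, smul_eq_mul, Nat.mul_comm] at hlt
  exact lt_irrefl _ hlt

lemma exists_coloring_aux {α : Type} (t : Finset α) (s : Finset ℕ) (u v : ℕ → α)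
    (hu : ∀ a ∈ s, u a ∈ t) (hv : ∀ a ∈ s, v a ∈ t)
    (hne : ∀ a ∈ s, u a ≠ v a) :
    ∃ ν : α → Bool, s.card ≤ 2 * (s.filter fun a => ν (u a) ≠ ν (v a)).card := by
  classical
  rcases s.eq_empty_or_nonempty with rfl | ⟨a0, ha0⟩
  · exact ⟨fun _ => false, by simp⟩
  have : Inhabited {x // x ∈ t} := ⟨⟨u a0, hu a0 ha0⟩⟩
  set U : ℕ → {x // x ∈ t} := fun a => if h : a ∈ s then ⟨u a, hu a h⟩ else default with hU
  set V : ℕ → {x // x ∈ t} := fun a => if h : a ∈ s then ⟨v a, hv a h⟩ else default with hV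
  obtain ⟨ρ, hρ⟩ := exists_coloring_aux' s U V (by
    intro a ha
    simp only [hU, hV, dif_pos ha, ne_eq, Subtype.mk.injEq]
    exact hne a ha)
  refine ⟨fun x => if h : x ∈ t then ρ ⟨x, h⟩ else false, ?_⟩
  have heq : (s.filter fun a => ρ (U a) ≠ ρ (V a)) =
      (s.filter fun a =>
        (fun x => if h : x ∈ t then ρ ⟨x, h⟩ else false) (u a) ≠
        (fun x => if h : x ∈ t then ρ ⟨x, h⟩ else false) (v a)) := by
    apply Finset.filter_congr
    intro a ha
    simp only [hU, hV, dif_pos ha, dif_pos (hu a ha), dif_pos (hv a ha)]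
  rwa [heq] at hρ

/-- The attribute set of a depth-`d` tree has fewer than `(k+2)^d` elements. -/
lemma attrSet_card_succ_le {k : ℕ} (Γ : DT k) :
    Γ.attrSet.card + 1 ≤ (k + 2) ^ Γ.depth := by
  classical
  induction Γ with
  | leaf b =>
    rw [DT.attrSet, DT.depth]
    simp
  | node a ch ih =>
    rw [DT.attrSet, DT.depth]
    set d := Finset.univ.sup fun i => (ch i).depth with hd'
    have h1 : (insert a (Finset.univ.biUnion fun i => (ch i).attrSet)).card ≤
        1 + ∑ i : Fin (k + 2), (ch i).attrSet.card := by
      refine le_trans (Finset.card_insert_le _ _) ?_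
      rw [Nat.add_comm 1 (∑ i : Fin (k + 2), (ch i).attrSet.card)]
      exact Nat.add_le_add_right (Finset.card_biUnion_le (s := Finset.univ) (t := fun i => (ch i).attrSet)) 1
    have h2 : ∀ i : Fin (k + 2), (ch i).attrSet.card + 1 ≤ (k + 2) ^ d := by
      intro i
      refine le_trans (ih i) ?_
      have hle : (ch i).depth ≤ d := by
        rw [hd']
        exact Finset.le_sup (f := fun i => (ch i).depth) (Finset.mem_univ i)
      exact Nat.pow_le_pow_right (by omega) hle
    have h3 : ∑ i : Fin (k + 2), ((ch i).attrSet.card + 1) ≤ (k + 2) ^ (d + 1) := by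
      calc ∑ i : Fin (k + 2), ((ch i).attrSet.card + 1)
          ≤ ∑ _i : Fin (k + 2), (k + 2) ^ d := Finset.sum_le_sum (fun i _ => h2 i)
        _ = (k + 2) * (k + 2) ^ d := by
            rw [Finset.sum_const, smul_eq_mul, Finset.card_univ, Fintype.card_fin]
        _ = (k + 2) ^ (d + 1) := by rw [pow_succ, Nat.mul_comm]
    have h4 : ∑ i : Fin (k + 2), ((ch i).attrSet.card + 1) =
        (∑ i : Fin (k + 2), (ch i).attrSet.card) + (k + 2) := by
      rw [Finset.sum_add_distrib, Finset.sum_const, smul_eq_mul,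
        Finset.card_univ, Fintype.card_fin, Nat.mul_one]
    have h5 : (∑ i : Fin (k + 2), (ch i).attrSet.card) + 2 ≤ (k + 2) ^ (d + 1) := by
      rw [h4] at h3
      omega
    rw [Nat.add_comm 1 d]
    omega

/-- If two rows agreeing outside `a` get different results, the tree queries `a`. -/
lemma mem_attrSet_of_diverge {k : ℕ} (Γ : DT k) (u v : ℕ → Fin (k + 2)) (a : ℕ)
    (hne : Γ.eval u ≠ Γ.eval v) (hagree : ∀ b, b ≠ a → u b = v b) :
    a ∈ Γ.attrSet := by
  classical
  induction Γ with
  | leaf b => exact absurd rfl hne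
  | node c ch ih =>
    by_cases hca : c = a
    · subst hca
      exact Finset.mem_insert_self _ _
    · have huv : u c = v c := hagree c hca
      have hne' : (ch (u c)).eval u ≠ (ch (u c)).eval v := by
        intro hcontra
        apply hne
        show (ch (u c)).eval u = (ch (v c)).eval v
        rw [← huv]
        exact hcontra
      have := ih (u c) hne'
      exact Finset.mem_insert_of_mem
        (Finset.mem_biUnion.mpr ⟨u c, Finset.mem_univ _, this⟩)

/-- A complete tree querying the attributes of a list. -/
def fullTree {k : ℕ} (f : (ℕ → Fin (k + 2)) → Bool) :
    List ℕ → (ℕ → Fin (k + 2)) → DT k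
  | [], acc => DT.leaf (f acc)
  | a :: t, acc => DT.node a (fun i => fullTree f t (Function.update acc a i))

lemma fullTree_eval {k : ℕ} (f : (ℕ → Fin (k + 2)) → Bool) :
    ∀ (l : List ℕ) (acc r : ℕ → Fin (k + 2)),
      (fullTree f l acc).eval r = f (fun b => if b ∈ l then r b else acc b) := by
  intro l
  induction l with
  | nil =>
    intro acc r
    simp [fullTree, DT.eval]
  | cons a t ih =>
    intro acc r
    show (fullTree f t (Function.update acc a (r a))).eval r = _
    rw [ih]
    congr 1
    funext b
    by_cases hbt : b ∈ t
    · simp [hbt, List.mem_cons]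
    · by_cases hba : b = a
      · subst hba
        simp [hbt, List.mem_cons]
      · simp [hbt, hba, List.mem_cons, Function.update_of_ne hba]

lemma fullTree_attrSet {k : ℕ} (f : (ℕ → Fin (k + 2)) → Bool) :
    ∀ (l : List ℕ) (acc : ℕ → Fin (k + 2)),
      (fullTree f l acc).attrSet ⊆ l.toFinset := by
  intro l
  induction l with
  | nil => intro acc; simp [fullTree, DT.attrSet]
  | cons a t ih =>
    intro acc x hx
    rcases Finset.mem_insert.mp hx with rfl | hx'
    · simp
    · obtain ⟨i, _, hxi⟩ := Finset.mem_biUnion.mp hx'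
      have := ih (Function.update acc a i) hxi
      simp only [List.toFinset_cons, Finset.mem_insert]
      exact Or.inr (by simpa using this)

lemma fullTree_depth {k : ℕ} (f : (ℕ → Fin (k + 2)) → Bool) :
    ∀ (l : List ℕ) (acc : ℕ → Fin (k + 2)),
      (fullTree f l acc).depth = l.length := by
  intro l
  induction l with
  | nil => intro acc; simp [fullTree, DT.depth]
  | cons a t ih =>
    intro acc
    show 1 + Finset.univ.sup (fun i => (fullTree f t (Function.update acc a i)).depth)
        = t.length + 1
    have : ∀ i : Fin (k + 2),
        (fullTree f t (Function.update acc a i)).depth = t.length := fun i => ih _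
    rw [Finset.sup_congr rfl (fun i _ => this i), Finset.sup_const
      (Finset.univ_nonempty) t.length, Nat.add_comm]

/-- Rows of a table are separated by the full attribute set. -/
lemma separates_attrs {k : ℕ} (Tt : Table k) (r : ℕ → Fin (k + 2)) (hr : r ∈ Tt.rows) :
    Tt.Separates Tt.attrs r := by
  refine ⟨subset_rfl, ?_⟩
  intro r' hr' hne
  by_contra hno
  push_neg at hno
  apply hne
  funext b
  by_cases hb : b ∈ Tt.attrs
  · exact (hno b hb).symm
  · rw [Tt.supp r' hr' b hb, Tt.supp r hr b hb]

lemma S_le_W {k : ℕ} (Tt : Table k) : Tt.S ≤ Tt.attrs.card := by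
  apply csSup_le'
  rintro m ⟨r, hr, rfl⟩
  exact Nat.sInf_le ⟨Tt.attrs, separates_attrs Tt r hr, rfl⟩

/-- Counting bound: `N(T) ≤ ((W(T)+1)(k+2))^{S(T)}`. -/
lemma table_count {k : ℕ} (Tt : Table k) :
    Tt.N ≤ ((Tt.attrs.card + 1) * (k + 2)) ^ Tt.S := by
  classical
  have hrow : ∀ r ∈ Tt.rows, ∃ E : Finset ℕ, Tt.Separates E r ∧ E.card ≤ Tt.S := by
    intro r hr
    have hne : {m | ∃ E : Finset ℕ, Tt.Separates E r ∧ E.card = m}.Nonempty :=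
      ⟨Tt.attrs.card, Tt.attrs, separates_attrs Tt r hr, rfl⟩
    obtain ⟨E, hE, hEcard⟩ := Nat.sInf_mem hne
    refine ⟨E, hE, ?_⟩
    have h1 : Tt.Srow r = E.card := hEcard.symm
    have h2 : Tt.Srow r ≤ Tt.S := by
      apply le_csSup
      · refine ⟨Tt.attrs.card, ?_⟩
        rintro m ⟨r', hr', rfl⟩
        exact Nat.sInf_le ⟨Tt.attrs, separates_attrs Tt r' hr', rfl⟩
      · exact ⟨r, hr, rfl⟩
    omega
  choose! E hEsep hEcard using hrow
  set E' : (ℕ → Fin (k + 2)) → Finset ℕ := fun r => E r ∩ Tt.attrs with hE'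
  have hE'sub : ∀ r, E' r ⊆ Tt.attrs := fun r => Finset.inter_subset_right
  have hE'eq : ∀ r ∈ Tt.rows, E' r = E r := by
    intro r hr
    exact Finset.inter_eq_left.mpr (hEsep r hr).1
  set m := Tt.S with hm
  set enc : (ℕ → Fin (k + 2)) → (Fin m → Option {a // a ∈ Tt.attrs} × Fin (k + 2)) :=
    fun r i =>
      if h : (i : ℕ) < ((E' r).sort (· ≤ ·)).length then
        (some ⟨((E' r).sort (· ≤ ·)).get ⟨i, h⟩,
          hE'sub r ((Finset.mem_sort (· ≤ ·)).mp (List.get_mem _ ⟨i, h⟩))⟩,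
         r (((E' r).sort (· ≤ ·)).get ⟨i, h⟩))
      else (none, 0) with henc
  have hinj : Set.InjOn enc (Tt.rows : Set (ℕ → Fin (k + 2))) := by
    intro r hr r' hr' heq
    rw [Finset.mem_coe] at hr hr'
    have hagree : ∀ a ∈ E r, r' a = r a := by
      intro a ha
      have ha' : a ∈ ((E' r).sort (· ≤ ·)) := by
        rw [Finset.mem_sort, hE'eq r hr]; exact ha
      obtain ⟨i, hia⟩ := List.mem_iff_get.mp ha'
      have hilen : (i : ℕ) < ((E' r).sort (· ≤ ·)).length := i.isLt
      have him : (i : ℕ) < m := by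
        have hlen : ((E' r).sort (· ≤ ·)).length = (E' r).card :=
          Finset.length_sort _
        have hcm : (E' r).card ≤ m := by rw [hE'eq r hr]; exact hEcard r hr
        omega
      have hkey := congrFun heq ⟨(i : ℕ), him⟩
      simp only [henc] at hkey
      rw [dif_pos hilen] at hkey
      by_cases h' : ((i : ℕ)) < ((E' r').sort (· ≤ ·)).length
      · rw [dif_pos h'] at hkey
        have hfst := congrArg Prod.fst hkey
        have hsnd := congrArg Prod.snd hkey
        simp only at hfst hsnd
        have hgets : ((E' r).sort (· ≤ ·)).get ⟨(i : ℕ), hilen⟩ =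
            ((E' r').sort (· ≤ ·)).get ⟨(i : ℕ), h'⟩ := by
          have := Option.some_injective _ hfst
          exact congrArg Subtype.val this
        have hia' : ((E' r).sort (· ≤ ·)).get ⟨(i : ℕ), hilen⟩ = a := by
          rw [← hia]
        rw [hia'] at hgets hsnd
        rw [hgets] at hsnd ⊢
        exact hsnd.symm
      · rw [dif_neg h'] at hkey
        exact absurd (congrArg Prod.fst hkey) (by simp)
    by_contra hne
    obtain ⟨a, ha, hane⟩ := (hEsep r hr).2 r' hr' (Ne.symm hne)
    exact hane (hagree a ha).symm
  have hcard := Finset.card_le_card_of_injOn enc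
    (fun r _ => Finset.mem_univ (enc r)) hinj
  rw [Finset.card_univ] at hcard
  have hfin : Fintype.card (Fin m → Option {a // a ∈ Tt.attrs} × Fin (k + 2))
      = ((Tt.attrs.card + 1) * (k + 2)) ^ m := by
    rw [Fintype.card_fun]
    congr 1
    rw [Fintype.card_prod, Fintype.card_option, Fintype.card_coe, Fintype.card_fin]
    · rw [Fintype.card_fin]
  rw [hfin] at hcard
  exact hcard

lemma restrict_row_eq {k : ℕ} (T : Table k) (r : ℕ → Fin (k + 2)) (hr : r ∈ T.rows) :
    restrict T.attrs r = r := by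
  funext b
  by_cases hb : b ∈ T.attrs
  · simp [restrict, hb]
  · simp [restrict, hb, T.supp r hr b hb]

lemma inClosure_self {k : ℕ} (T : Table k) : InClosure T T := by
  refine ⟨subset_rfl, ?_⟩
  ext r
  constructor
  · intro hr
    exact ⟨r, hr, restrict_row_eq T r hr⟩
  · rintro ⟨r', hr', rfl⟩
    rw [restrict_row_eq T r' hr']
    exact hr'

end Lemma14Aux

/-- Lemma 14: for any nonempty table `T` there exists
`T* ∈ [T]` with `h^d(T*) ≥ log_k N(T) / Ŝ(T) − 2`. -/
theorem exists_closure_table_lemma14 (k : ℕ) (T : Table k)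
    (h : T.rows.Nonempty) :
    ∃ T' : Table k, InClosure T' T ∧
      Real.logb (k + 2) (T.N : ℝ) / (Shat T : ℝ) - 2 ≤ (hd T' : ℝ) := by
  classical
  by_cases hS0 : Shat T = 0
  · refine ⟨T, inClosure_self T, ?_⟩
    rw [hS0]
    simp only [Nat.cast_zero, div_zero, zero_sub]
    have h0 : (0 : ℝ) ≤ (hd T : ℝ) := Nat.cast_nonneg _
    linarith
  have hS1 : 1 ≤ Shat T := Nat.one_le_iff_ne_zero.mpr hS0
  -- a minimum distinguishing set of columns
  set Dset : Set ℕ := {n | ∃ E : Finset ℕ, (E ⊆ T.attrs ∧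
    ∀ r ∈ T.rows, ∀ r' ∈ T.rows, r ≠ r' → ∃ a ∈ E, r a ≠ r' a) ∧ E.card = n}
    with hDsetdef
  have hDne : Dset.Nonempty := by
    refine ⟨T.attrs.card, T.attrs, ⟨subset_rfl, ?_⟩, rfl⟩
    intro r hr r' hr' hne
    by_contra hno
    push_neg at hno
    apply hne
    funext b
    by_cases hb : b ∈ T.attrs
    · exact hno b hb
    · rw [T.supp r hr b hb, T.supp r' hr' b hb]
  obtain ⟨D, ⟨hDsub, hDsep⟩, hDcard⟩ := Nat.sInf_mem hDne
  have hres : ∀ r ∈ T.rows, ∀ r' ∈ T.rows, restrict D r = restrict D r' → r = r' := by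
    intro r hr r' hr' heq
    by_contra hne
    obtain ⟨a, haD, hane⟩ := hDsep r hr r' hr' hne
    apply hane
    have hfa := congrFun heq a
    simpa [restrict, haD] using hfa
  set rows0 : Finset (ℕ → Fin (k + 2)) := T.rows.image (restrict D) with hrows0
  have hmemrows0 : ∀ r ∈ T.rows, restrict D r ∈ rows0 :=
    fun r hr => Finset.mem_image_of_mem _ hr
  have supp0 : ∀ r ∈ rows0, ∀ a ∉ D, r a = 0 := by
    intro r hr a ha
    obtain ⟨r₀, hr₀, rfl⟩ := Finset.mem_image.mp hr
    simp [restrict, ha]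
  -- criticality of the restricted table
  have hcrit : ∀ a ∈ D, ∃ u' ∈ rows0, ∃ v' ∈ rows0,
      u' a ≠ v' a ∧ ∀ b, b ≠ a → u' b = v' b := by
    intro a haD
    have herase : ¬ (∀ r ∈ T.rows, ∀ r' ∈ T.rows, r ≠ r' →
        ∃ b ∈ D.erase a, r b ≠ r' b) := by
      intro hcontra
      have hmem : (D.erase a).card ∈ Dset :=
        ⟨D.erase a, ⟨(D.erase_subset a).trans hDsub, hcontra⟩, rfl⟩
      have hle := Nat.sInf_le hmem
      rw [Finset.card_erase_of_mem haD] at hle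
      have hpos : 0 < D.card := Finset.card_pos.mpr ⟨a, haD⟩
      omega
    push_neg at herase
    obtain ⟨r, hr, r', hr', hne, hagr⟩ := herase
    obtain ⟨c, hcD, hcne⟩ := hDsep r hr r' hr' hne
    have hca : c = a := by
      by_contra hcc
      exact hcne (hagr c (Finset.mem_erase.mpr ⟨hcc, hcD⟩))
    subst hca
    refine ⟨restrict D r, hmemrows0 r hr, restrict D r', hmemrows0 r' hr', ?_, ?_⟩
    · simpa [restrict, hcD] using hcne
    · intro b hb
      by_cases hbD : b ∈ D
      · have hbe : b ∈ D.erase c := Finset.mem_erase.mpr ⟨hb, hbD⟩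
        simp [restrict, hbD, hagr b hbe]
      · simp [restrict, hbD]
  choose! u hu v hv hune hagree using hcrit
  obtain ⟨ν, hν⟩ := exists_coloring_aux rows0 D u v hu hv
    (fun a ha hEq => hune a ha (congrFun hEq a))
  refine ⟨⟨D, rows0, ν, supp0⟩, ⟨hDsub, Finset.coe_image⟩, ?_⟩
  set T' : Table k := ⟨D, rows0, ν, supp0⟩ with hT'
  have hclosure : InClosure T' T := ⟨hDsub, Finset.coe_image⟩
  have hNeq : T'.N = T.N := by
    show rows0.card = T.rows.card
    rw [hrows0]
    apply Finset.card_image_of_injOn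
    intro r hr r' hr' heq
    exact hres r (Finset.mem_coe.mp hr) r' (Finset.mem_coe.mp hr') heq
  -- a deterministic decision tree for `T'` exists
  have hdne : {m | ∃ Γ : DT k, IsDT T' Γ ∧ Γ.depth = m}.Nonempty := by
    refine ⟨(fullTree ν (D.sort (· ≤ ·)) (fun _ => 0)).depth,
      fullTree ν (D.sort (· ≤ ·)) (fun _ => 0), ⟨?_, ?_⟩, rfl⟩
    · refine (fullTree_attrSet ν _ _).trans ?_
      intro x hx
      rw [List.mem_toFinset, Finset.mem_sort] at hx
      exact hx
    · intro r hr
      rw [fullTree_eval]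
      show ν _ = ν r
      congr 1
      funext b
      by_cases hb : b ∈ D.sort (· ≤ ·)
      · simp [hb]
      · rw [if_neg hb]
        rw [Finset.mem_sort] at hb
        exact (supp0 r hr b hb).symm
  obtain ⟨Γ, ⟨hΓattr, hΓeval⟩, hΓdepth⟩ := Nat.sInf_mem hdne
  -- every cut column is queried by `Γ`
  have hcut : (D.filter fun a => ν (u a) ≠ ν (v a)) ⊆ Γ.attrSet := by
    intro a ha
    rw [Finset.mem_filter] at ha
    obtain ⟨haD, hane⟩ := ha
    apply mem_attrSet_of_diverge Γ (u a) (v a) a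
    · rw [hΓeval (u a) (hu a haD), hΓeval (v a) (hv a haD)]
      exact hane
    · exact hagree a haD
  have hWbound : D.card + 1 ≤ (k + 2) ^ (hd T' + 1) := by
    have h1 : D.card ≤ 2 * Γ.attrSet.card :=
      le_trans hν (Nat.mul_le_mul_left 2 (Finset.card_le_card hcut))
    have hhd : Γ.depth = hd T' := hΓdepth
    have h2 : Γ.attrSet.card + 1 ≤ (k + 2) ^ (hd T') := by
      rw [← hhd]
      exact attrSet_card_succ_le Γ
    have h3 : (k + 2) ^ (hd T' + 1) = (k + 2) * (k + 2) ^ (hd T') := by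
      rw [pow_succ, Nat.mul_comm]
    have h4 : 2 * (k + 2) ^ hd T' ≤ (k + 2) * (k + 2) ^ hd T' :=
      Nat.mul_le_mul_right _ (by omega)
    omega
  have hScl : T'.S ≤ Shat T := by
    apply le_csSup
    · refine ⟨T.attrs.card, ?_⟩
      rintro m ⟨T'', hT''cl, rfl⟩
      exact le_trans (S_le_W T'') (Finset.card_le_card hT''cl.1)
    · exact ⟨T', hclosure, rfl⟩
  have hcount : T.N ≤ (k + 2) ^ ((hd T' + 2) * Shat T) := by
    have h1 : T.N ≤ ((D.card + 1) * (k + 2)) ^ T'.S := by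
      rw [← hNeq]
      exact table_count T'
    have h2 : ((D.card + 1) * (k + 2)) ^ T'.S ≤
        ((k + 2) ^ (hd T' + 1) * (k + 2)) ^ T'.S :=
      Nat.pow_le_pow_left (Nat.mul_le_mul_right _ hWbound) _
    have h3 : (k + 2) ^ (hd T' + 1) * (k + 2) = (k + 2) ^ (hd T' + 2) := by
      rw [← pow_succ]
    have h4 : ((k + 2) ^ (hd T' + 2)) ^ T'.S = (k + 2) ^ ((hd T' + 2) * T'.S) := by
      rw [← pow_mul]
    have h5 : (k + 2) ^ ((hd T' + 2) * T'.S) ≤ (k + 2) ^ ((hd T' + 2) * Shat T) :=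
      Nat.pow_le_pow_right (by omega) (Nat.mul_le_mul_left _ hScl)
    calc T.N ≤ ((D.card + 1) * (k + 2)) ^ T'.S := h1
      _ ≤ ((k + 2) ^ (hd T' + 1) * (k + 2)) ^ T'.S := h2
      _ = (k + 2) ^ ((hd T' + 2) * T'.S) := by rw [h3, h4]
      _ ≤ (k + 2) ^ ((hd T' + 2) * Shat T) := h5
  -- final real arithmetic
  have hb1 : (1 : ℝ) < (k : ℝ) + 2 := by
    have hk : (0 : ℝ) ≤ (k : ℝ) := Nat.cast_nonneg k
    linarith
  have hNpos : (0 : ℝ) < (T.N : ℝ) := by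
    have hc : 0 < T.N := Finset.card_pos.mpr h
    exact_mod_cast hc
  have hlog : Real.logb ((k : ℝ) + 2) (T.N : ℝ) ≤
      (((hd T' + 2) * Shat T : ℕ) : ℝ) := by
    have hcast : ((((k + 2) ^ ((hd T' + 2) * Shat T) : ℕ)) : ℝ) =
        ((k : ℝ) + 2) ^ ((hd T' + 2) * Shat T) := by
      push_cast
      ring
    calc Real.logb ((k : ℝ) + 2) (T.N : ℝ)
        ≤ Real.logb ((k : ℝ) + 2) ((((k + 2) ^ ((hd T' + 2) * Shat T) : ℕ)) : ℝ) :=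
          Real.logb_le_logb_of_le hb1 hNpos (by exact_mod_cast hcount)
      _ = (((hd T' + 2) * Shat T : ℕ) : ℝ) := by
          rw [hcast, Real.logb_pow, Real.logb_self_eq_one hb1]
          push_cast
          ring
  have hSpos : (0 : ℝ) < (Shat T : ℝ) := by
    have hc : 0 < Shat T := hS1
    exact_mod_cast hc
  have hdiv : Real.logb ((k : ℝ) + 2) (T.N : ℝ) / (Shat T : ℝ) ≤ (hd T' : ℝ) + 2 := by
    rw [div_le_iff₀ hSpos]
    calc Real.logb ((k : ℝ) + 2) (T.N : ℝ)
        ≤ (((hd T' + 2) * Shat T : ℕ) : ℝ) := hlog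
      _ = ((hd T' : ℝ) + 2) * (Shat T : ℝ) := by push_cast; ring
  linarith
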